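/- For n : ℕ let v k = (1, 2^k) ∈ ℝ × ℝ and let Z n = { ∑_{k=0}^{n-1} t k • v k | t : Fin n → ℝ, ∀ k, 0 ≤ t k ∧ t k ≤ 1 } be the zonotope generated by the vectors (1, 2^k) for k < n. Then for every n ≥ 1, the set of extreme points of Z n (over ℝ) equals the union of the prefix sums and the suffix sums of the generators, namely { ∑_{k<j} (1, 2^k) | 0 ≤ j ≤ n } ∪ { ∑_{j ≤ k < n} (1, 2^k) | 0 ≤ j ≤ n }, and this set has exactly 2·n elements. (This makes precise the paper's claim that for n unknown inputs the set of possible value combinations of (x, y) in the Lola_𝔹/𝓛𝓐 counterexample is a polygon with 2n edges.) -/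

import Mathlib

open Finset
def zonV (k : ℕ) : ℝ × ℝ := (1, 2 ^ k)
noncomputable def zonφ (c : ℝ × ℝ) : ℝ × ℝ →ₗ[ℝ] ℝ := c.1 • LinearMap.fst ℝ ℝ ℝ + c.2 • LinearMap.snd ℝ ℝ ℝ
lemma zonφ_apply (c z : ℝ × ℝ) : zonφ c z = c.1 * z.1 + c.2 * z.2 := by
  simp [zonφ]

lemma zonV_ne_zero (k : ℕ) : zonV k ≠ 0 := by
  simp [zonV, Prod.ext_iff]

def zonZ (n : ℕ) : Set (ℝ × ℝ) :=
  { z : ℝ × ℝ | ∃ t : Fin n → ℝ, (∀ k, 0 ≤ t k ∧ t k ≤ 1) ∧ z = ∑ k, t k • zonV (k : ℕ) }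

lemma zon_extreme_of_sep {n : ℕ} (S : Finset (Fin n)) (c : ℝ × ℝ)
    (hpos : ∀ k ∈ S, 0 < zonφ c (zonV (k : ℕ)))
    (hneg : ∀ k ∉ S, zonφ c (zonV (k : ℕ)) < 0) :
    (∑ k ∈ S, zonV (k : ℕ)) ∈ Set.extremePoints ℝ (zonZ n) := by
  classical
  set p : ℝ × ℝ := ∑ k ∈ S, zonV (k : ℕ) with hp
  have hpZ : p ∈ zonZ n := by
    refine ⟨fun k => if k ∈ S then 1 else 0, fun k => by by_cases h : k ∈ S <;> simp [h], ?_⟩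
    rw [hp]
    rw [Finset.sum_congr rfl (fun k (_ : k ∈ univ) => show
      (if k ∈ S then (1:ℝ) else 0) • zonV (k:ℕ) = if k ∈ S then zonV (k:ℕ) else 0 by
        by_cases h : k ∈ S <;> simp [h])]
    rw [Finset.sum_ite_mem, Finset.univ_inter]
  set M : ℝ := ∑ k ∈ S, zonφ c (zonV (k : ℕ)) with hM
  have hφp : zonφ c p = M := by rw [hp, map_sum]
  -- key: for z in Z, φ z ≤ M, and equality forces z = p
  have key : ∀ z ∈ zonZ n, zonφ c z ≤ M ∧ (zonφ c z = M → z = p) := by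
    rintro z ⟨t, ht, rfl⟩
    have hφz : zonφ c (∑ k, t k • zonV (k:ℕ)) = ∑ k : Fin n, t k * zonφ c (zonV (k:ℕ)) := by
      rw [map_sum]; exact Finset.sum_congr rfl fun k _ => by rw [map_smul]; rfl
    have hMalt : M = ∑ k : Fin n, (if k ∈ S then zonφ c (zonV (k:ℕ)) else 0) := by
      rw [hM, Finset.sum_ite_mem, Finset.univ_inter]
    have hterm : ∀ k : Fin n, t k * zonφ c (zonV (k:ℕ)) ≤ (if k ∈ S then zonφ c (zonV (k:ℕ)) else 0) := by
      intro k
      by_cases h : k ∈ S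
      · simpa [h] using mul_le_of_le_one_left (hpos k h).le (ht k).2
      · simpa [h] using mul_nonpos_of_nonneg_of_nonpos (ht k).1 (hneg k h).le
    constructor
    · rw [hφz, hMalt]; exact Finset.sum_le_sum fun k _ => hterm k
    · intro heq
      have hall : ∀ k : Fin n, t k = (if k ∈ S then 1 else 0) := by
        by_contra hc
        push_neg at hc
        obtain ⟨k, hk⟩ := hc
        have hstrict : t k * zonφ c (zonV (k:ℕ)) < (if k ∈ S then zonφ c (zonV (k:ℕ)) else 0) := by
          by_cases h : k ∈ S
          · have h1 : t k < 1 := lt_of_le_of_ne (ht k).2 (by simpa [h] using hk)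
            simpa [h] using mul_lt_of_lt_one_left (hpos k h) h1
          · have h1 : 0 < t k := lt_of_le_of_ne (ht k).1 (by simpa [h] using (Ne.symm hk))
            simpa [h] using mul_neg_of_pos_of_neg h1 (hneg k h)
        have : zonφ c (∑ k, t k • zonV (k:ℕ)) < M := by
          rw [hφz, hMalt]
          exact Finset.sum_lt_sum (fun k _ => hterm k) ⟨k, Finset.mem_univ k, hstrict⟩
        exact absurd heq (ne_of_lt this)
      rw [Finset.sum_congr rfl fun k (_ : k ∈ univ) => by rw [hall k]]
      rw [Finset.sum_congr rfl (fun k (_ : k ∈ univ) => show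
        (if k ∈ S then (1:ℝ) else 0) • zonV (k:ℕ) = if k ∈ S then zonV (k:ℕ) else 0 by
          by_cases h : k ∈ S <;> simp [h])]
      rw [Finset.sum_ite_mem, Finset.univ_inter]
  refine ⟨hpZ, fun x hx y hy hseg => ?_⟩
  obtain ⟨a, b, ha, hb, hab, habp⟩ := hseg
  have hφx := key x hx
  have hφy := key y hy
  have hxM : zonφ c x = M := by
    by_contra hne
    have hx' : zonφ c x < M := lt_of_le_of_ne hφx.1 hne
    have : zonφ c p < M := by
      calc zonφ c p = a * zonφ c x + b * zonφ c y := by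
            rw [← habp, map_add, map_smul, map_smul]; rfl
        _ < a * M + b * M := by
            have h1 : a * zonφ c x < a * M := by exact (mul_lt_mul_iff_right₀ ha).2 hx'
            have h2 : b * zonφ c y ≤ b * M := by exact mul_le_mul_of_nonneg_left hφy.1 hb.le
            linarith
        _ = M := by rw [← add_mul, hab, one_mul]
    exact absurd hφp (ne_of_lt this)
  have hyM : zonφ c y = M := by
    have : a * zonφ c x + b * zonφ c y = M := by
      rw [← hφp, ← habp, map_add, map_smul, map_smul]; rfl
    rw [hxM] at this
    have hbne : b ≠ 0 := ne_of_gt hb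
    have hM2 : a * M + b * M = M := by rw [← add_mul, hab, one_mul]
    have : b * zonφ c y = b * M := by linarith
    exact mul_left_cancel₀ hbne this
  exact hφx.2 hxM

lemma zon_sum_update {n : ℕ} (t : Fin n → ℝ) (i : Fin n) (b : ℝ) :
    ∑ k, (Function.update t i b) k • zonV (k : ℕ) = (∑ k, t k • zonV (k : ℕ)) + (b - t i) • zonV (i : ℕ) := by
  have h1 : ∀ k : Fin n, (Function.update t i b) k • zonV (k : ℕ)
      = Function.update (fun k : Fin n => t k • zonV (k : ℕ)) i (b • zonV (i : ℕ)) k := by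
    intro k
    rcases eq_or_ne k i with rfl | hk
    · simp
    · simp [Function.update_of_ne hk]
  rw [Finset.sum_congr rfl fun k _ => h1 k,
    Finset.sum_update_of_mem (Finset.mem_univ i)]
  have h2 : ∑ k, t k • zonV (k : ℕ)
      = t i • zonV (i : ℕ) + ∑ k ∈ Finset.univ \ {i}, t k • zonV (k : ℕ) := by
    rw [← Finset.sum_update_of_mem (Finset.mem_univ i)]
    refine Finset.sum_congr rfl fun k _ => ?_
    rcases eq_or_ne k i with rfl | hk
    · simp
    · simp [Function.update_of_ne hk]
  rw [h2, sub_smul]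
  abel

lemma zon_forward {n : ℕ} {z : ℝ × ℝ} (hz : z ∈ Set.extremePoints ℝ (zonZ n)) :
    ∃ S : Finset (Fin n),
      ((∀ a b : Fin n, a < b → b ∈ S → a ∈ S) ∨ (∀ a b : Fin n, a < b → a ∈ S → b ∈ S)) ∧
      z = ∑ k ∈ S, zonV (k : ℕ) := by
  classical
  obtain ⟨⟨t, ht, rfl⟩, hext⟩ := hz
  set z : ℝ × ℝ := ∑ k, t k • zonV (k : ℕ) with hzdef
  -- step 1 : t k ∈ {0,1}
  have step1 : ∀ k : Fin n, t k = 0 ∨ t k = 1 := by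
    intro k
    by_contra hc
    push_neg at hc
    have h0 : 0 < t k := lt_of_le_of_ne (ht k).1 (Ne.symm hc.1)
    have h1 : t k < 1 := lt_of_le_of_ne (ht k).2 hc.2
    set ε : ℝ := min (t k) (1 - t k) with hε
    have hε0 : 0 < ε := lt_min h0 (by linarith)
    have hε1 : ε ≤ t k := min_le_left _ _
    have hε2 : ε ≤ 1 - t k := min_le_right _ _
    set z₁ : ℝ × ℝ := ∑ j, (Function.update t k (t k - ε)) j • zonV (j : ℕ) with hz1
    set z₂ : ℝ × ℝ := ∑ j, (Function.update t k (t k + ε)) j • zonV (j : ℕ) with hz2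
    have hz1Z : z₁ ∈ zonZ n := by
      refine ⟨_, fun j => ?_, rfl⟩
      rcases eq_or_ne j k with rfl | hj
      · simp only [Function.update_self]; constructor <;> linarith [(ht j).2]
      · simp only [Function.update_of_ne hj]; exact ht j
    have hz2Z : z₂ ∈ zonZ n := by
      refine ⟨_, fun j => ?_, rfl⟩
      rcases eq_or_ne j k with rfl | hj
      · simp only [Function.update_self]; constructor <;> linarith [(ht j).1]
      · simp only [Function.update_of_ne hj]; exact ht j
    have e1 : z₁ = z - ε • zonV (k : ℕ) := by
      rw [hz1, zon_sum_update, ← hzdef]; rw [show t k - ε - t k = -ε by ring]; module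
    have e2 : z₂ = z + ε • zonV (k : ℕ) := by
      rw [hz2, zon_sum_update, ← hzdef]; rw [show t k + ε - t k = ε by ring]
    have hseg : z ∈ openSegment ℝ z₁ z₂ := by
      refine ⟨1/2, 1/2, by norm_num, by norm_num, by norm_num, ?_⟩
      rw [e1, e2]; module
    have := hext hz1Z hz2Z hseg
    rw [e1] at this
    have : ε • zonV (k : ℕ) = 0 := by
      have := sub_eq_self.mp this
      exact this
    rcases smul_eq_zero.mp this with h | h
    · exact absurd h (ne_of_gt hε0)
    · exact zonV_ne_zero _ h
  -- S : set of indices with t = 1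
  set S : Finset (Fin n) := Finset.univ.filter (fun k => t k = 1) with hS
  have hmemS : ∀ k : Fin n, k ∈ S ↔ t k = 1 := by
    intro k; simp [hS]
  have hnotS : ∀ k : Fin n, k ∉ S → t k = 0 := by
    intro k hk
    rcases step1 k with h | h
    · exact h
    · exact absurd ((hmemS k).2 h) hk
  refine ⟨S, ?_, ?_⟩
  · -- down-closed or up-closed
    by_contra hc
    push_neg at hc
    obtain ⟨⟨i, j, hij, hjS, hiS⟩, ⟨i', j', hij', hi'S, hj'S⟩⟩ := hc
    have hti : t i = 0 := hnotS i hiS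
    have htj : t j = 1 := (hmemS j).1 hjS
    have hti' : t i' = 1 := (hmemS i').1 hi'S
    have htj' : t j' = 0 := hnotS j' hj'S
    set c1 : ℝ := 2 ^ (j : ℕ) - 2 ^ (i : ℕ) with hc1
    set c2 : ℝ := 2 ^ (j' : ℕ) - 2 ^ (i' : ℕ) with hc2
    have hc1pos : 0 < c1 := by
      have : (2:ℝ) ^ (i:ℕ) < 2 ^ (j:ℕ) := pow_lt_pow_right₀ one_lt_two hij
      linarith
    have hc2pos : 0 < c2 := by
      have : (2:ℝ) ^ (i':ℕ) < 2 ^ (j':ℕ) := pow_lt_pow_right₀ one_lt_two hij'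
      linarith
    set δ : ℝ := min c1 c2 with hδ
    have hδpos : 0 < δ := lt_min hc1pos hc2pos
    set ε : ℝ := δ / c1 with hεd
    set ε' : ℝ := δ / c2 with hε'd
    have hεpos : 0 < ε := div_pos hδpos hc1pos
    have hε1 : ε ≤ 1 := by
      rw [hεd, div_le_one hc1pos]; exact min_le_left _ _
    have hε'pos : 0 < ε' := div_pos hδpos hc2pos
    have hε'1 : ε' ≤ 1 := by
      rw [hε'd, div_le_one hc2pos]; exact min_le_right _ _
    have hijne : i ≠ j := ne_of_lt hij
    have hij'ne : i' ≠ j' := ne_of_lt hij'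
    set t₁ : Fin n → ℝ := Function.update (Function.update t i ε) j (1 - ε) with ht₁
    set t₂ : Fin n → ℝ := Function.update (Function.update t i' (1 - ε')) j' ε' with ht₂
    set z₁ : ℝ × ℝ := ∑ k, t₁ k • zonV (k : ℕ) with hz1
    set z₂ : ℝ × ℝ := ∑ k, t₂ k • zonV (k : ℕ) with hz2
    have hz1Z : z₁ ∈ zonZ n := by
      refine ⟨t₁, fun k => ?_, rfl⟩
      rcases eq_or_ne k j with rfl | hkj
      · simp only [ht₁, Function.update_self]; constructor <;> linarith
      · rcases eq_or_ne k i with rfl | hki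
        · simp only [ht₁, Function.update_of_ne hkj, Function.update_self]
          constructor <;> linarith
        · simp only [ht₁, Function.update_of_ne hkj, Function.update_of_ne hki]; exact ht k
    have hz2Z : z₂ ∈ zonZ n := by
      refine ⟨t₂, fun k => ?_, rfl⟩
      rcases eq_or_ne k j' with rfl | hkj
      · simp only [ht₂, Function.update_self]; constructor <;> linarith
      · rcases eq_or_ne k i' with rfl | hki
        · simp only [ht₂, Function.update_of_ne hkj, Function.update_self]
          constructor <;> linarith
        · simp only [ht₂, Function.update_of_ne hkj, Function.update_of_ne hki]; exact ht k
    have e1 : z₁ = z + ((0 : ℝ), -δ) := by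
      rw [hz1, ht₁, zon_sum_update, zon_sum_update, ← hzdef]
      rw [Function.update_of_ne (Ne.symm hijne)]
      rw [hti, htj]
      have : (ε - 0) • zonV (i:ℕ) + (1 - ε - 1) • zonV (j:ℕ) = ((0:ℝ), -δ) := by
        simp only [zonV, Prod.smul_mk, Prod.mk_add_mk, smul_eq_mul]
        have hδc : ε * c1 = δ := div_mul_cancel₀ δ (ne_of_gt hc1pos)
        rw [Prod.mk.injEq]
        constructor
        · ring
        · rw [hc1] at hδc; ring_nf; ring_nf at hδc; linarith
      rw [add_assoc, this]
    have e2 : z₂ = z + ((0 : ℝ), δ) := by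
      rw [hz2, ht₂, zon_sum_update, zon_sum_update, ← hzdef]
      rw [Function.update_of_ne (Ne.symm hij'ne)]
      rw [hti', htj']
      have : (1 - ε' - 1) • zonV (i':ℕ) + (ε' - 0) • zonV (j':ℕ) = ((0:ℝ), δ) := by
        simp only [zonV, Prod.smul_mk, Prod.mk_add_mk, smul_eq_mul]
        have hδc : ε' * c2 = δ := div_mul_cancel₀ δ (ne_of_gt hc2pos)
        rw [Prod.mk.injEq]
        constructor
        · ring
        · rw [hc2] at hδc; ring_nf; ring_nf at hδc; linarith
      rw [add_assoc, this]
    have hseg : z ∈ openSegment ℝ z₁ z₂ := by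
      refine ⟨1/2, 1/2, by norm_num, by norm_num, by norm_num, ?_⟩
      rw [e1, e2]
      have : ((0:ℝ), -δ) = -((0:ℝ), δ) := by simp [Prod.ext_iff]
      rw [this]; module
    have := hext hz1Z hz2Z hseg
    rw [e1] at this
    have h0 : ((0:ℝ), -δ) = (0 : ℝ × ℝ) := by
      have := add_eq_left.mp this  -- z + w = z → w = 0
      exact this
    have : -δ = 0 := (Prod.ext_iff.mp h0).2
    linarith
  · -- z = ∑ S
    rw [hzdef]
    rw [Finset.sum_congr rfl (fun k (_ : k ∈ univ) => show
      t k • zonV (k:ℕ) = if k ∈ S then zonV (k:ℕ) else 0 by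
        by_cases h : k ∈ S
        · simp [h, (hmemS k).1 h]
        · simp [h, hnotS k h])]
    rw [Finset.sum_ite_mem, Finset.univ_inter]

lemma zon_downclosed_nat (T : Finset ℕ) (h : ∀ a b : ℕ, a < b → b ∈ T → a ∈ T) :
    T = Finset.range T.card := by
  ext x
  simp only [Finset.mem_range]
  constructor
  · intro hx
    have hsub : Finset.range (x + 1) ⊆ T := by
      intro a ha
      rw [Finset.mem_range, Nat.lt_succ_iff] at ha
      rcases eq_or_lt_of_le ha with rfl | ha'
      · exact hx
      · exact h a x ha' hx
    have := Finset.card_le_card hsub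
    simpa using this
  · intro hx
    by_contra hxT
    have hsub : T ⊆ Finset.range x := by
      intro b hb
      rw [Finset.mem_range]
      by_contra hbx
      push_neg at hbx
      rcases eq_or_lt_of_le hbx with rfl | hlt
      · exact hxT hb
      · exact hxT (h x b hlt hb)
    have := Finset.card_le_card hsub
    simp at this
    omega

lemma zon_upclosed_nat (T : Finset ℕ) (n : ℕ) (hTn : ∀ x ∈ T, x < n)
    (h : ∀ a b : ℕ, a < b → b < n → a ∈ T → b ∈ T) :
    T = Finset.Ico (n - T.card) n := by
  ext x
  simp only [Finset.mem_Ico]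
  constructor
  · intro hx
    refine ⟨?_, hTn x hx⟩
    have hsub : Finset.Ico x n ⊆ T := by
      intro b hb
      rw [Finset.mem_Ico] at hb
      rcases eq_or_lt_of_le hb.1 with rfl | hlt
      · exact hx
      · exact h x b hlt hb.2 hx
    have := Finset.card_le_card hsub
    rw [Nat.card_Ico] at this
    omega
  · rintro ⟨h1, h2⟩
    by_contra hxT
    have hsub : T ⊆ Finset.Ico (x + 1) n := by
      intro b hb
      rw [Finset.mem_Ico]
      refine ⟨?_, hTn b hb⟩
      by_contra hbx
      push_neg at hbx
      rw [Nat.lt_succ_iff] at hbx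
      rcases eq_or_lt_of_le hbx with rfl | hlt
      · exact hxT hb
      · exact hxT (h b x hlt h2 hb)
    have := Finset.card_le_card hsub
    rw [Nat.card_Ico] at this
    omega

lemma zon_sum_finset_val {n : ℕ} (S : Finset (Fin n)) :
    ∑ k ∈ S, zonV (k : ℕ) = ∑ x ∈ S.image (Fin.val), zonV x := by
  rw [Finset.sum_image (fun a _ b _ h => Fin.val_injective h)]

lemma zon_prefix_sum (j : ℕ) : ∑ k ∈ Finset.range j, zonV k = ((j : ℝ), 2 ^ j - 1) := by
  induction j with
  | zero => simp [Prod.ext_iff]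
  | succ m ih =>
      rw [Finset.sum_range_succ, ih]
      simp only [zonV, Prod.mk_add_mk, Prod.mk.injEq]
      constructor
      · push_cast; ring
      · ring

lemma zon_suffix_sum {j n : ℕ} (hj : j ≤ n) :
    ∑ k ∈ Finset.Ico j n, zonV k = (((n - j : ℕ) : ℝ), 2 ^ n - 2 ^ j) := by
  have := Finset.sum_Ico_eq_sub (fun k => zonV k) hj
  rw [this, zon_prefix_sum, zon_prefix_sum]
  simp only [Prod.mk_sub_mk, Prod.mk.injEq]
  constructor
  · push_cast [Nat.cast_sub hj]; ring
  · ring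

-- the key inequality: for 0 < j < n, 2^(n-j) + 2^j < 2^n + 1
lemma zon_pow_ineq {j n : ℕ} (h0 : 0 < j) (h1 : j < n) :
    (2:ℝ) ^ (n - j) + 2 ^ j < 2 ^ n + 1 := by
  have e1 : (2:ℝ) ^ (n - j) ≤ 2 ^ (n - 1) := by
    apply pow_le_pow_right₀ one_le_two; omega
  have e2 : (2:ℝ) ^ j ≤ 2 ^ (n - 1) := by
    apply pow_le_pow_right₀ one_le_two; omega
  have e3 : (2:ℝ) ^ (n - 1) * 2 = 2 ^ n := by
    rw [← pow_succ]; congr 1; omega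
  linarith

-- prefix extremality
lemma zon_prefix_extreme {n j : ℕ} (hj : j ≤ n) :
    (∑ k ∈ Finset.range j, zonV k) ∈ Set.extremePoints ℝ (zonZ n) := by
  classical
  have himg : (Finset.univ.filter (fun k : Fin n => (k : ℕ) < j)).image Fin.val
      = Finset.range j := by
    ext x
    simp only [Finset.mem_image, Finset.mem_filter, Finset.mem_univ, true_and, Finset.mem_range]
    constructor
    · rintro ⟨k, hk, rfl⟩; exact hk
    · intro hx; exact ⟨⟨x, lt_of_lt_of_le hx hj⟩, hx, rfl⟩
  have := zon_extreme_of_sep (n := n) (Finset.univ.filter (fun k : Fin n => (k : ℕ) < j))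
    ((3 * 2 ^ j, -4)) ?_ ?_
  · rwa [zon_sum_finset_val, himg] at this
  · intro k hk
    rw [Finset.mem_filter] at hk
    rw [zonφ_apply]
    simp only [zonV]
    have h2 : (2:ℝ) ^ ((k:ℕ)+1) ≤ 2 ^ j := pow_le_pow_right₀ one_le_two hk.2
    rw [pow_succ] at h2
    nlinarith [pow_pos (by norm_num : (0:ℝ) < 2) j, pow_pos (by norm_num : (0:ℝ) < 2) (k:ℕ)]
  · intro k hk
    rw [Finset.mem_filter] at hk
    push_neg at hk
    have hjk : j ≤ (k : ℕ) := hk (Finset.mem_univ k)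
    rw [zonφ_apply]
    simp only [zonV]
    have h2 : (2:ℝ) ^ j ≤ 2 ^ (k:ℕ) := pow_le_pow_right₀ one_le_two hjk
    nlinarith [pow_pos (by norm_num : (0:ℝ) < 2) j]

-- suffix extremality
lemma zon_suffix_extreme {n j : ℕ} (hj : j ≤ n) :
    (∑ k ∈ Finset.Ico j n, zonV k) ∈ Set.extremePoints ℝ (zonZ n) := by
  classical
  have himg : (Finset.univ.filter (fun k : Fin n => j ≤ (k : ℕ))).image Fin.val
      = Finset.Ico j n := by
    ext x
    simp only [Finset.mem_image, Finset.mem_filter, Finset.mem_univ, true_and, Finset.mem_Ico]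
    constructor
    · rintro ⟨k, hk, rfl⟩; exact ⟨hk, k.isLt⟩
    · rintro ⟨h1, h2⟩; exact ⟨⟨x, h2⟩, h1, rfl⟩
  have := zon_extreme_of_sep (n := n) (Finset.univ.filter (fun k : Fin n => j ≤ (k : ℕ)))
    ((-(3 * 2 ^ j), 4)) ?_ ?_
  · rwa [zon_sum_finset_val, himg] at this
  · intro k hk
    rw [Finset.mem_filter] at hk
    rw [zonφ_apply]
    simp only [zonV]
    have h2 : (2:ℝ) ^ j ≤ 2 ^ (k:ℕ) := pow_le_pow_right₀ one_le_two hk.2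
    nlinarith [pow_pos (by norm_num : (0:ℝ) < 2) j]
  · intro k hk
    rw [Finset.mem_filter] at hk
    push_neg at hk
    have hjk : (k : ℕ) < j := hk (Finset.mem_univ k)
    rw [zonφ_apply]
    simp only [zonV]
    have h2 : (2:ℝ) ^ ((k:ℕ)+1) ≤ 2 ^ j := pow_le_pow_right₀ one_le_two hjk
    rw [pow_succ] at h2
    nlinarith [pow_pos (by norm_num : (0:ℝ) < 2) j, pow_pos (by norm_num : (0:ℝ) < 2) (k:ℕ)]

lemma zon_set_eq (n : ℕ) :
    Set.extremePoints ℝ (zonZ n)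
      = ({ z : ℝ × ℝ | ∃ j ≤ n, z = ∑ k ∈ Finset.range j, zonV k } ∪
         { z : ℝ × ℝ | ∃ j ≤ n, z = ∑ k ∈ Finset.Ico j n, zonV k }) := by
  classical
  apply Set.Subset.antisymm
  · intro z hz
    obtain ⟨S, hcl, rfl⟩ := zon_forward hz
    have hcardle : S.card ≤ n := by
      have := Finset.card_le_univ S
      simpa using this
    have hcardim : (S.image Fin.val).card = S.card :=
      Finset.card_image_of_injective S Fin.val_injective
    rcases hcl with hdown | hup
    · left
      refine ⟨S.card, hcardle, ?_⟩
      rw [zon_sum_finset_val]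
      have hT : S.image Fin.val = Finset.range (S.image Fin.val).card := by
        apply zon_downclosed_nat
        intro a b hab hb
        rw [Finset.mem_image] at hb ⊢
        obtain ⟨k, hk, rfl⟩ := hb
        have han : a < n := lt_trans hab k.isLt
        exact ⟨⟨a, han⟩, hdown ⟨a, han⟩ k (by simpa [Fin.lt_def] using hab) hk, rfl⟩
      rw [hT, hcardim]
    · right
      refine ⟨n - S.card, Nat.sub_le n _, ?_⟩
      rw [zon_sum_finset_val]
      have hT : S.image Fin.val = Finset.Ico (n - (S.image Fin.val).card) n := by
        apply zon_upclosed_nat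
        · intro x hx
          rw [Finset.mem_image] at hx
          obtain ⟨k, _, rfl⟩ := hx
          exact k.isLt
        · intro a b hab hbn ha
          rw [Finset.mem_image] at ha ⊢
          obtain ⟨k, hk, rfl⟩ := ha
          exact ⟨⟨b, hbn⟩, hup k ⟨b, hbn⟩ (by simpa [Fin.lt_def] using hab) hk, rfl⟩
      rw [hT, hcardim]
  · rintro z (⟨j, hj, rfl⟩ | ⟨j, hj, rfl⟩)
    · exact zon_prefix_extreme hj
    · exact zon_suffix_extreme hj

lemma zon_card (n : ℕ) (hn : 1 ≤ n) :
    (Set.extremePoints ℝ (zonZ n)).ncard = 2 * n := by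
  classical
  rw [zon_set_eq n]
  set Pf : ℕ → ℝ × ℝ := fun j => ((j : ℝ), 2 ^ j - 1) with hPf
  set Sf : ℕ → ℝ × ℝ := fun j => (((n - j : ℕ) : ℝ), 2 ^ n - 2 ^ j) with hSf
  set A : Finset (ℝ × ℝ) := (Finset.range (n+1)).image Pf with hA
  set B : Finset (ℝ × ℝ) := (Finset.range (n+1)).image Sf with hB
  have hU : ({ z : ℝ × ℝ | ∃ j ≤ n, z = ∑ k ∈ Finset.range j, zonV k } ∪
         { z : ℝ × ℝ | ∃ j ≤ n, z = ∑ k ∈ Finset.Ico j n, zonV k }) = ↑(A ∪ B) := by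
    ext z
    simp only [Set.mem_union, Set.mem_setOf_eq, Finset.coe_union, Set.mem_union,
      Finset.mem_coe, Finset.mem_union, hA, hB, Finset.mem_image, Finset.mem_range,
      Nat.lt_succ_iff]
    constructor
    · rintro (⟨j, hj, rfl⟩ | ⟨j, hj, rfl⟩)
      · exact Or.inl ⟨j, hj, (zon_prefix_sum j).symm⟩
      · exact Or.inr ⟨j, hj, (zon_suffix_sum hj).symm⟩
    · rintro (⟨j, hj, rfl⟩ | ⟨j, hj, rfl⟩)
      · exact Or.inl ⟨j, hj, (zon_prefix_sum j).symm⟩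
      · exact Or.inr ⟨j, hj, (zon_suffix_sum hj).symm⟩
  rw [hU, Set.ncard_coe_finset]
  -- A ∪ B = A ∪ (B \ A), disjoint
  have hsplit : (A ∪ B).card = A.card + (B \ A).card := by
    rw [← Finset.union_sdiff_self_eq_union]
    exact Finset.card_union_of_disjoint Finset.disjoint_sdiff
  have hcardA : A.card = n + 1 := by
    rw [hA, Finset.card_image_of_injective, Finset.card_range]
    intro a b hab
    have : (a : ℝ) = b := (Prod.ext_iff.mp hab).1
    exact_mod_cast this
  -- facts about Sf hitting A
  have hSf0 : Sf 0 = Pf n := by simp [hSf, hPf]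
  have hSfn : Sf n = Pf 0 := by simp [hSf, hPf]
  have hnotinA : ∀ j, 1 ≤ j → j < n → Sf j ∉ A := by
    intro j h1 h2 hmem
    rw [hA, Finset.mem_image] at hmem
    obtain ⟨i, hi, hie⟩ := hmem
    have hie' : (((i : ℕ) : ℝ), (2:ℝ) ^ i - 1) = ((((n - j : ℕ)) : ℝ), (2:ℝ) ^ n - 2 ^ j) := hie
    rw [Prod.mk.injEq] at hie'
    have hieq : i = n - j := by exact_mod_cast hie'.1
    have hsnd : (2:ℝ) ^ n - 2 ^ j = 2 ^ i - 1 := hie'.2.symm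
    rw [hieq] at hsnd
    have := zon_pow_ineq h1 h2
    linarith
  have hBA : B \ A = (Finset.Ico 1 n).image Sf := by
    ext z
    simp only [Finset.mem_sdiff, hB, Finset.mem_image, Finset.mem_range, Nat.lt_succ_iff,
      Finset.mem_Ico]
    constructor
    · rintro ⟨⟨j, hj, rfl⟩, hzA⟩
      refine ⟨j, ⟨?_, ?_⟩, rfl⟩
      · by_contra h0
        push_neg at h0
        interval_cases j
        exact hzA (by rw [hSf0, hA]; exact Finset.mem_image_of_mem Pf (by simp))
      · rcases lt_or_eq_of_le hj with h | rfl
        · exact h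
        · exact absurd (by rw [hSfn, hA]; exact Finset.mem_image_of_mem Pf (by simp [hn]))
            hzA
    · rintro ⟨j, ⟨h1, h2⟩, rfl⟩
      exact ⟨⟨j, le_of_lt h2, rfl⟩, hnotinA j h1 h2⟩
  have hcardBA : (B \ A).card = n - 1 := by
    rw [hBA, Finset.card_image_of_injOn, Nat.card_Ico]
    intro a ha b hb hab
    simp only [Finset.coe_Ico, Set.mem_Ico] at ha hb
    have hfst : ((n - a : ℕ) : ℝ) = ((n - b : ℕ) : ℝ) := (Prod.ext_iff.mp hab).1
    have : n - a = n - b := by exact_mod_cast hfst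
    omega
  rw [hsplit, hcardA, hcardBA]
  omega

/-- For the zonotope `Z n` generated by the vectors `(1, 2^k)`, `k < n`, the extreme
points are exactly the prefix sums and the suffix sums of the generators, and there
are exactly `2·n` of them. -/
theorem zonotope_pow2_extremePoints (n : ℕ) (hn : 1 ≤ n) :
    Set.extremePoints ℝ
        { z : ℝ × ℝ | ∃ t : Fin n → ℝ, (∀ k, 0 ≤ t k ∧ t k ≤ 1) ∧
          z = ∑ k, t k • (((1 : ℝ), (2 : ℝ) ^ (k : ℕ))) }
      = ({ z : ℝ × ℝ | ∃ j ≤ n, z = ∑ k ∈ Finset.range j, ((1 : ℝ), (2 : ℝ) ^ k) } ∪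
         { z : ℝ × ℝ | ∃ j ≤ n, z = ∑ k ∈ Finset.Ico j n, ((1 : ℝ), (2 : ℝ) ^ k) }) ∧
    (Set.extremePoints ℝ
        { z : ℝ × ℝ | ∃ t : Fin n → ℝ, (∀ k, 0 ≤ t k ∧ t k ≤ 1) ∧
          z = ∑ k, t k • (((1 : ℝ), (2 : ℝ) ^ (k : ℕ))) }).ncard = 2 * n := by
  constructor
  · exact zon_set_eq n
  · exact zon_card n hn
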